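/- Let V be a finite-dimensional vector space of dimension n ≥ 2 over a field F, with a fixed basis B = {v_1, …, v_n}. Then the nonzero component union graph UG(V) with respect to B is not complemented, and hence not uniquely complemented. -/

import Mathlib

namespace UG

variable {F V : Type*} [Field F] [AddCommGroup V] [Module F V]
  {n : ℕ} (b : Module.Basis (Fin n) F V)

/-- The skeleton (support) `S_B(a)` of a vector with respect to the basis `b`. -/
def supp (a : V) : Set (Fin n) := {i | b.repr a i ≠ 0}

/-- Adjacency in the nonzero component union graph `UG(V)`: distinct nonzero vectors
whose supports together cover the whole basis. -/
def Adj (a c : V) : Prop :=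
  a ≠ c ∧ a ≠ 0 ∧ c ≠ 0 ∧ supp b a ∪ supp b c = Set.univ

/-- `c` is a complement of `a` in `UG(V)`. -/
def IsComplementOf (a c : V) : Prop :=
  Adj b a c ∧ ∀ d : V, ¬ (Adj b d a ∧ Adj b d c)

/-- `UG(V)` is complemented: every vertex (nonzero vector) has a complement. -/
def Complemented : Prop :=
  ∀ a : V, a ≠ 0 → ∃ c : V, IsComplementOf b a c

/-- `UG(V)` is uniquely complemented. -/
def UniquelyComplemented : Prop :=
  Complemented b ∧
    ∀ a c d : V, IsComplementOf b a c → IsComplementOf b a d →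
      ∀ x : V, (Adj b x c ↔ Adj b x d)

end UG

open UG in
/-- For a vector space `V` of dimension `n ≥ 2` over a field `F` with
a fixed basis `B = {v₁, …, vₙ}`, the nonzero component union graph `UG(V)` with
respect to `B` is not complemented, and hence not uniquely complemented. -/
theorem stmt_17 (F V : Type*) [Field F] [AddCommGroup V] [Module F V]
    (n : ℕ) (hn : 2 ≤ n) (b : Module.Basis (Fin n) F V) :
    ¬ Complemented b ∧ ¬ UniquelyComplemented b := by

  classical
  have key : ∀ f : Fin n → F, ∀ i, b.repr (b.equivFun.symm f) i = f i := by
    intro f i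
    have h1 := b.equivFun.apply_symm_apply f
    have h2 : b.equivFun (b.equivFun.symm f) i = b.repr (b.equivFun.symm f) i := by
      rw [Module.Basis.equivFun_apply]
    rw [← h2, h1]
  suffices hnc : ¬ Complemented b by exact ⟨hnc, fun h => hnc h.1⟩
  intro hC
  set i0 : Fin n := ⟨0, by omega⟩ with hi0
  set i1 : Fin n := ⟨1, by omega⟩ with hi1
  have hne01 : i0 ≠ i1 := by simp [hi0, hi1, Fin.ext_iff]
  set a : V := b.equivFun.symm (fun _ => 1) with ha_def
  have hra : ∀ i, b.repr a i = 1 := fun i => key _ i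
  have ha : a ≠ 0 := by
    intro h
    have h2 := hra i0
    rw [h] at h2; simp at h2
  have hsa : supp b a = Set.univ := by
    ext i; simp [supp, hra]
  obtain ⟨c, ⟨hac, -, hc0, -⟩, hnone⟩ := hC a ha
  by_cases hT : ∀ i, b.repr c i ≠ 0
  · by_cases hF : ∃ x : F, x ≠ 0 ∧ x ≠ 1
    · obtain ⟨x, hx0, hx1⟩ := hF
      obtain ⟨y, hy0, hyc⟩ : ∃ y : F, y ≠ 0 ∧ y ≠ b.repr c i1 := by
        by_cases h1 : b.repr c i1 = 1
        · exact ⟨x, hx0, by rw [h1]; exact hx1⟩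
        · exact ⟨1, one_ne_zero, fun h => h1 h.symm⟩
      set f : Fin n → F := fun i => if i = i0 then x else if i = i1 then y else 1 with hf
      set d : V := b.equivFun.symm f with hd
      have hrd : ∀ i, b.repr d i = f i := fun i => key f i
      have hd0 : d ≠ 0 := by
        intro h
        have h2 := hrd i0
        rw [h] at h2
        simp [hf] at h2
        exact hx0 h2.symm
      have hda : d ≠ a := by
        intro h
        have h2 := hrd i0
        rw [h, hra] at h2
        simp [hf] at h2
        exact hx1 h2.symm
      have hdc : d ≠ c := by
        intro h
        have h2 := hrd i1
        rw [h] at h2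
        simp [hf, hne01.symm] at h2
        exact hyc h2.symm
      apply hnone d
      refine ⟨⟨hda, hd0, ha, ?_⟩, ⟨hdc, hd0, hc0, ?_⟩⟩
      · rw [hsa]; simp
      · ext i
        simp only [Set.mem_union, Set.mem_univ, iff_true, supp, Set.mem_setOf_eq]
        exact Or.inr (hT i)
    · push_neg at hF
      apply hac
      apply b.repr.injective
      ext i
      have h1 := hF (b.repr c i) (hT i)
      rw [hra, h1]
  · push_neg at hT
    obtain ⟨j, hj⟩ := hT
    set f : Fin n → F := fun i => if b.repr c i = 0 then 1 else 0 with hf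
    set d : V := b.equivFun.symm f with hd
    have hrd : ∀ i, b.repr d i = f i := fun i => key f i
    have hd0 : d ≠ 0 := by
      intro h
      have h2 := hrd j
      rw [h] at h2
      simp [hf, hj] at h2
    obtain ⟨k, hk⟩ : ∃ k, b.repr c k ≠ 0 := by
      by_contra h
      push_neg at h
      apply hc0
      apply b.repr.injective; ext i; simp [h i]
    have hda : d ≠ a := by
      intro h
      have h2 := hrd k
      rw [h, hra] at h2
      simp [hf, hk] at h2
    have hdc : d ≠ c := by
      intro h
      have h2 := hrd j
      rw [h, hj] at h2
      simp [hf, hj] at h2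
    apply hnone d
    refine ⟨⟨hda, hd0, ha, ?_⟩, ⟨hdc, hd0, hc0, ?_⟩⟩
    · rw [hsa]; simp
    · ext i
      simp only [Set.mem_union, Set.mem_univ, iff_true, supp, Set.mem_setOf_eq, hrd]
      by_cases h : b.repr c i = 0
      · left; simp [hf, h]
      · right; exact h
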